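/- Let t ≥ 2 be an integer and let n > (t+1)²(t+2)/4. Suppose G is a graph on an n-element vertex set V in which every vertex has triangle-degree at least C(t,2), and G has the minimum number of edges among all graphs on V with this property. Then there exists a set S of t + 1 vertices such that S induces a complete graph in G and no vertex of S has a neighbor outside S. -/

import Mathlib

open Finset

/-- The triangle-degree of `v`: the number of triangles of `G` containing `v`. -/
def triangleDeg {V : Type*} [Fintype V] [DecidableEq V]
    (G : SimpleGraph V) [DecidableRel G.Adj] (v : V) : ℕ :=
  ((G.cliqueFinset 3).filter (fun s => v ∈ s)).card

section Helpers

variable {V : Type*} [Fintype V] [DecidableEq V]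
variable (G : SimpleGraph V) [DecidableRel G.Adj]

/-- If the neighborhood of `v` contains a `k`-clique, then `v` is in at least
`C(k,2)` triangles. -/
lemma tri_lower_of_clique {v : V} {T : Finset V} {k : ℕ}
    (hsub : T ⊆ G.neighborFinset v) (hcard : T.card = k)
    (hcl : ∀ a ∈ T, ∀ b ∈ T, a ≠ b → G.Adj a b) :
    k.choose 2 ≤ triangleDeg G v := by
  classical
  have hvT : v ∉ T := fun hv => G.notMem_neighborFinset_self v (hsub hv)
  have := Finset.card_le_card_of_injOn (f := fun p => insert v p)
    (s := T.powersetCard 2)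
    (t := (G.cliqueFinset 3).filter (fun s => v ∈ s)) ?_ ?_
  · rwa [Finset.card_powersetCard, hcard] at this
  · intro p hp
    obtain ⟨hpT, hp2⟩ := Finset.mem_powersetCard.1 hp
    obtain ⟨a, b, hab, rfl⟩ := Finset.card_eq_two.1 hp2
    have ha : a ∈ T := hpT (by simp)
    have hb : b ∈ T := hpT (by simp)
    have hva : G.Adj v a := (SimpleGraph.mem_neighborFinset ..).1 (hsub ha)
    have hvb : G.Adj v b := (SimpleGraph.mem_neighborFinset ..).1 (hsub hb)
    refine Finset.mem_filter.2 ⟨?_, by simp⟩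
    rw [SimpleGraph.mem_cliqueFinset_iff]
    exact SimpleGraph.is3Clique_triple_iff.2 ⟨hva, hvb, hcl a ha b hb hab⟩
  · intro p hp p' hp' hins
    have hvp : v ∉ p := fun hv => hvT ((Finset.mem_powersetCard.1 hp).1 hv)
    have hvp' : v ∉ p' := fun hv => hvT ((Finset.mem_powersetCard.1 hp').1 hv)
    have := congrArg (fun s => Finset.erase s v) hins
    simpa [Finset.erase_insert hvp, Finset.erase_insert hvp'] using this

/-- Triangles at `v` inject into pairs of neighbors of `v`. -/
lemma tri_upper (v : V) : triangleDeg G v ≤ (G.degree v).choose 2 := by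
  classical
  rw [triangleDeg, show G.degree v = (G.neighborFinset v).card from rfl,
    ← Finset.card_powersetCard]
  apply Finset.card_le_card_of_injOn (fun s => s.erase v)
  · intro s hs
    obtain ⟨hcl, hv⟩ := Finset.mem_filter.1 hs
    rw [SimpleGraph.mem_cliqueFinset_iff] at hcl
    refine Finset.mem_powersetCard.2 ⟨?_, ?_⟩
    · intro u hu
      have h' := Finset.mem_erase.1 hu
      exact (SimpleGraph.mem_neighborFinset ..).2 (hcl.1 hv h'.2 (Ne.symm h'.1))
    · rw [Finset.card_erase_of_mem hv, hcl.2]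
  · intro s hs s' hs' h
    have hv : v ∈ s := (Finset.mem_filter.1 hs).2
    have hv' : v ∈ s' := (Finset.mem_filter.1 hs').2
    have := congrArg (insert v) h
    rwa [Finset.insert_erase hv, Finset.insert_erase hv'] at this

/-- Every vertex with triangle-degree at least `C(t,2)` has degree at least `t`. -/
lemma deg_lower {t : ℕ} (ht : 2 ≤ t) {v : V}
    (h : Nat.choose t 2 ≤ triangleDeg G v) : t ≤ G.degree v := by
  by_contra hlt
  push_neg at hlt
  obtain ⟨m, rfl⟩ : ∃ m, t = m + 1 := ⟨t - 1, by omega⟩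
  have h1 : G.degree v ≤ m := by omega
  have h2 : (G.degree v).choose 2 ≤ m.choose 2 := Nat.choose_le_choose 2 h1
  have h3 : (m+1).choose 2 = m.choose 1 + m.choose 2 := Nat.choose_succ_succ m 1
  have h4 : 1 ≤ m.choose 1 := by simp [Nat.choose_one_right]; omega
  have h5 := tri_upper G v
  omega

/-- If `v` has degree exactly `t` and triangle-degree at least `C(t,2)`, then its
neighborhood is a clique. -/
lemma nbhd_clique {t : ℕ} (ht : 2 ≤ t) {v : V} (hdv : G.degree v = t)
    (h : Nat.choose t 2 ≤ triangleDeg G v) :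
    ∀ a ∈ G.neighborFinset v, ∀ b ∈ G.neighborFinset v, a ≠ b → G.Adj a b := by
  classical
  by_contra hbad
  push_neg at hbad
  obtain ⟨a, ha, b, hb, hab, hnadj⟩ := hbad
  have habsub : ({a, b} : Finset V) ⊆ G.neighborFinset v := by
    intro x hx
    rcases Finset.mem_insert.1 hx with rfl | hx
    · exact ha
    · exact (Finset.mem_singleton.1 hx) ▸ hb
  have habmem : ({a, b} : Finset V) ∈ (G.neighborFinset v).powersetCard 2 :=
    Finset.mem_powersetCard.2 ⟨habsub, Finset.card_pair hab⟩
  have hcard : triangleDeg G v ≤ (((G.neighborFinset v).powersetCard 2).erase {a, b}).card := by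
    apply Finset.card_le_card_of_injOn (fun s => s.erase v)
    · intro s hs
      obtain ⟨hcl, hv⟩ := Finset.mem_filter.1 hs
      rw [SimpleGraph.mem_cliqueFinset_iff] at hcl
      refine Finset.mem_erase.2 ⟨?_, ?_⟩
      · intro heq
        have haS : a ∈ s := (Finset.erase_subset v s) ((show s.erase v = {a, b} from heq) ▸ (by simp : a ∈ ({a,b} : Finset V)))
        have hbS : b ∈ s := (Finset.erase_subset v s) ((show s.erase v = {a, b} from heq) ▸ (by simp : b ∈ ({a,b} : Finset V)))
        exact hnadj (hcl.1 haS hbS hab)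
      · refine Finset.mem_powersetCard.2 ⟨?_, ?_⟩
        · intro u hu
          obtain ⟨huv, hus⟩ := Finset.mem_erase.1 hu
          exact (SimpleGraph.mem_neighborFinset ..).2 (hcl.1 hv hus (Ne.symm huv))
        · rw [Finset.card_erase_of_mem hv, hcl.2]
    · intro s hs s' hs' heq
      have hv : v ∈ s := (Finset.mem_filter.1 hs).2
      have hv' : v ∈ s' := (Finset.mem_filter.1 hs').2
      have := congrArg (insert v) heq
      rwa [Finset.insert_erase hv, Finset.insert_erase hv'] at this
  rw [Finset.card_erase_of_mem habmem, Finset.card_powersetCard,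
    show (G.neighborFinset v).card = t from hdv] at hcard
  have hpos : 1 ≤ t.choose 2 := Nat.choose_pos ht
  omega

end Helpers

set_option maxHeartbeats 2000000

section Construction

variable {V : Type} [Fintype V] [DecidableEq V]

/-- The competitor graph: vertices are grouped into blocks of size `t+1` according
to `m · / (t+1)`; additionally, all vertices with `m`-value in `[0, t+1-r) ∪ [q(t+1), ∞)`
form a clique (this makes the leftover `r` vertices plus `t+1-r` vertices of block `0`
into an extra `(t+1)`-clique). -/
def bGraph (t q r : ℕ) (m : V → ℕ) : SimpleGraph V where
  Adj u v := u ≠ v ∧ (m u / (t+1) = m v / (t+1) ∨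
    ((m u < t+1-r ∨ q*(t+1) ≤ m u) ∧ (m v < t+1-r ∨ q*(t+1) ≤ m v)))
  symm := by
    refine ⟨fun u v h => ?_⟩
    refine ⟨h.1.symm, ?_⟩
    rcases h.2 with h2 | h2
    · exact Or.inl h2.symm
    · exact Or.inr ⟨h2.2, h2.1⟩
  loopless := ⟨fun v h => h.1 rfl⟩

instance bGraphDec (t q r : ℕ) (m : V → ℕ) : DecidableRel (bGraph t q r m).Adj :=
  fun u v => inferInstanceAs (Decidable (u ≠ v ∧ (m u / (t+1) = m v / (t+1) ∨
    ((m u < t+1-r ∨ q*(t+1) ≤ m u) ∧ (m v < t+1-r ∨ q*(t+1) ≤ m v)))))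

lemma card_filter_m {n : ℕ} (e : V ≃ Fin n) (P : ℕ → Prop) [DecidablePred P] :
    (Finset.univ.filter (fun v : V => P ((e v : ℕ)))).card
      = ((Finset.range n).filter P).card := by
  apply Finset.card_bij (fun v _ => ((e v : ℕ)))
  · intro v hv
    refine Finset.mem_filter.2 ⟨Finset.mem_range.2 (e v).2, (Finset.mem_filter.1 hv).2⟩
  · intro u hu v hv h
    exact e.injective (Fin.val_injective h)
  · intro i hi
    refine ⟨e.symm ⟨i, Finset.mem_range.1 (Finset.mem_filter.1 hi).1⟩, ?_, ?_⟩
    · refine Finset.mem_filter.2 ⟨Finset.mem_univ _, ?_⟩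
      simpa using (Finset.mem_filter.1 hi).2
    · simp

end Construction

/-- Proposition 3.2: for `n > (t+1)²(t+2)/4`, every extremal graph (edge-minimal
among `n`-vertex graphs in which every vertex lies in at least `C(t,2)` triangles)
contains an isolated copy of `K_{t+1}`. -/
theorem extremal_contains_isolated_clique (t : ℕ) (ht : 2 ≤ t)
    (V : Type) [Fintype V] [DecidableEq V] (n : ℕ) (hV : Fintype.card V = n)
    (hn : ((t + 1 : ℝ)) ^ 2 * ((t : ℝ) + 2) / 4 < (n : ℝ))
    (G : SimpleGraph V) [DecidableRel G.Adj]
    (hdeg : ∀ v : V, Nat.choose t 2 ≤ triangleDeg G v)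
    (hmin : ∀ (G' : SimpleGraph V) (_ : DecidableRel G'.Adj),
      (∀ v : V, Nat.choose t 2 ≤ triangleDeg G' v) →
      G.edgeFinset.card ≤ G'.edgeFinset.card) :
    ∃ S : Finset V, S.card = t + 1 ∧
      (∀ u ∈ S, ∀ v ∈ S, u ≠ v → G.Adj u v) ∧
      (∀ u ∈ S, ∀ v : V, G.Adj u v → v ∈ S) := by
  classical
  by_contra hcon
  -- basic numerology
  have htR : (2 : ℝ) ≤ (t : ℝ) := by exact_mod_cast ht
  have htn : t + 1 < n := by
    have h1 : ((t : ℝ) + 1) < ((t + 1 : ℝ)) ^ 2 * ((t : ℝ) + 2) / 4 := by nlinarith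
    have : ((t : ℝ) + 1) < (n : ℝ) := lt_trans h1 hn
    exact_mod_cast this
  set q := n / (t+1) with hq_def
  set r := n % (t+1) with hr_def
  have hqr : q * (t+1) + r = n := Nat.div_add_mod' n (t+1)
  have hrlt : r < t + 1 := Nat.mod_lt n (by omega)
  have hq1 : 1 ≤ q := (Nat.one_le_div_iff (by omega)).2 (by omega)
  -- the measuring function
  set e : V ≃ Fin n := Fintype.equivFinOfCardEq hV with he_def
  set m : V → ℕ := fun v => ((e v : ℕ)) with hm_def
  have hmlt : ∀ v, m v < n := fun v => (e v).2
  set G₀ : SimpleGraph V := bGraph t q r m with hG0_def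
  letI inst0 : DecidableRel G₀.Adj := bGraphDec t q r m
  -- every vertex of G has degree ≥ t
  have hdG : ∀ v, t ≤ G.degree v := fun v => deg_lower G ht (hdeg v)
  -- block cardinality computations
  have hblock_card : ∀ b : ℕ, b < q →
      (Finset.univ.filter (fun u : V => m u / (t+1) = b)).card = t + 1 := by
    intro b hb
    rw [hm_def]
    rw [card_filter_m e (fun i => i / (t+1) = b)]
    have : (Finset.range n).filter (fun i => i / (t+1) = b)
        = Finset.Ico (b*(t+1)) (b*(t+1)+(t+1)) := by
      ext i
      simp only [Finset.mem_filter, Finset.mem_range, Finset.mem_Ico]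
      have key : i / (t+1) = b ↔ (b*(t+1) ≤ i ∧ i < b*(t+1)+(t+1)) := by
        constructor
        · intro h
          constructor
          · exact (Nat.le_div_iff_mul_le (by omega)).1 (le_of_eq h.symm)
          · have : i / (t+1) < b + 1 := by omega
            have := (Nat.div_lt_iff_lt_mul (k := t+1) (by omega)).1 this
            nlinarith
        · intro ⟨h1, h2⟩
          have hle : b ≤ i / (t+1) := (Nat.le_div_iff_mul_le (by omega)).2 h1
          have hlt : i / (t+1) < b + 1 := (Nat.div_lt_iff_lt_mul (by omega)).2 (by nlinarith)
          omega
      have hbn : b*(t+1)+(t+1) ≤ n := by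
        have : (b+1) * (t+1) ≤ q * (t+1) := Nat.mul_le_mul_right _ (by omega)
        nlinarith
      constructor
      · rintro ⟨_, h⟩; exact key.1 h
      · intro h; exact ⟨by omega, key.2 h⟩
    rw [this, Nat.card_Ico]
    omega
  -- the special clique F
  have hF_card : (Finset.univ.filter (fun u : V => m u < t+1-r ∨ q*(t+1) ≤ m u)).card
      = t + 1 := by
    rw [hm_def, card_filter_m e (fun i => i < t+1-r ∨ q*(t+1) ≤ i)]
    have hsplit : (Finset.range n).filter (fun i => i < t+1-r ∨ q*(t+1) ≤ i)
        = Finset.range (t+1-r) ∪ Finset.Ico (q*(t+1)) n := by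
      ext i
      simp only [Finset.mem_filter, Finset.mem_range, Finset.mem_union, Finset.mem_Ico]
      have hq1' : t + 1 ≤ q * (t+1) := by nlinarith
      omega
    rw [hsplit, Finset.card_union_of_disjoint, Nat.card_Ico, Finset.card_range]
    · have hq1' : t + 1 ≤ q * (t+1) := by nlinarith
      have : q * (t+1) + r = n := by omega
      omega
    · rw [Finset.disjoint_left]
      intro i hi hi'
      have h1 := Finset.mem_range.1 hi
      have h2 := (Finset.mem_Ico.1 hi').1
      have hq1' : t + 1 ≤ q * (t+1) := by nlinarith
      omega
  -- extras count
  have hExtra_card : (Finset.univ.filter (fun u : V => q*(t+1) ≤ m u)).card = r := by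
    rw [hm_def, card_filter_m e (fun i => q*(t+1) ≤ i)]
    have : (Finset.range n).filter (fun i => q*(t+1) ≤ i) = Finset.Ico (q*(t+1)) n := by
      ext i
      simp only [Finset.mem_filter, Finset.mem_range, Finset.mem_Ico]
      omega
    rw [this, Nat.card_Ico]
    omega
  have hFlow_card : (Finset.univ.filter (fun u : V => m u < t+1-r)).card = t+1-r := by
    rw [hm_def, card_filter_m e (fun i => i < t+1-r)]
    have : (Finset.range n).filter (fun i => i < t+1-r) = Finset.range (t+1-r) := by
      ext i
      simp only [Finset.mem_filter, Finset.mem_range]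
      constructor
      · rintro ⟨_, h⟩; exact h
      · intro h; exact ⟨by omega, h⟩
    rw [this, Finset.card_range]
  -- G₀ satisfies the triangle-degree condition
  have hdeg0 : ∀ v : V, Nat.choose t 2 ≤ triangleDeg G₀ v := by
    intro v
    by_cases hc : q*(t+1) ≤ m v
    · -- use the special clique F
      set F := Finset.univ.filter (fun u : V => m u < t+1-r ∨ q*(t+1) ≤ m u) with hF
      have hvF : v ∈ F := Finset.mem_filter.2 ⟨Finset.mem_univ _, Or.inr hc⟩
      apply tri_lower_of_clique G₀ (T := F.erase v)
      · intro u hu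
        obtain ⟨huv, huF⟩ := Finset.mem_erase.1 hu
        refine (SimpleGraph.mem_neighborFinset ..).2 ?_
        exact ⟨Ne.symm huv, Or.inr ⟨Or.inr hc, (Finset.mem_filter.1 huF).2⟩⟩
      · rw [Finset.card_erase_of_mem hvF, hF_card]
        omega
      · intro a ha b hb hab
        exact ⟨hab, Or.inr ⟨(Finset.mem_filter.1 (Finset.mem_erase.1 ha).2).2,
          (Finset.mem_filter.1 (Finset.mem_erase.1 hb).2).2⟩⟩
    · -- use the block of v
      push_neg at hc
      set b := m v / (t+1) with hb_def
      have hbq : b < q := by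
        rw [hb_def]
        exact (Nat.div_lt_iff_lt_mul (by omega)).2 (by nlinarith)
      set B := Finset.univ.filter (fun u : V => m u / (t+1) = b) with hB
      have hvB : v ∈ B := Finset.mem_filter.2 ⟨Finset.mem_univ _, rfl⟩
      apply tri_lower_of_clique G₀ (T := B.erase v)
      · intro u hu
        obtain ⟨huv, huB⟩ := Finset.mem_erase.1 hu
        refine (SimpleGraph.mem_neighborFinset ..).2 ?_
        exact ⟨Ne.symm huv, Or.inl ((Finset.mem_filter.1 huB).2.symm ▸ rfl)⟩
      · rw [Finset.card_erase_of_mem hvB, hblock_card b hbq]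
        omega
      · intro a ha b' hb' hab
        have h1 := (Finset.mem_filter.1 (Finset.mem_erase.1 ha).2).2
        have h2 := (Finset.mem_filter.1 (Finset.mem_erase.1 hb').2).2
        exact ⟨hab, Or.inl (h1.trans h2.symm)⟩
  -- degree bound for G₀
  have hdeg0_le : ∀ v : V, G₀.degree v ≤ t + (if m v < t+1-r then r else 0) := by
    intro v
    by_cases h1 : m v < t+1-r
    · -- F-vertex: neighbors in block 0 or extras
      rw [if_pos h1]
      have hb0 : m v / (t+1) = 0 := Nat.div_eq_of_lt (by omega)
      have hsub : G₀.neighborFinset v ⊆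
          ((Finset.univ.filter (fun u : V => m u / (t+1) = 0)).erase v)
            ∪ (Finset.univ.filter (fun u : V => q*(t+1) ≤ m u)) := by
        intro u hu
        have hadj := (SimpleGraph.mem_neighborFinset ..).1 hu
        obtain ⟨hne, hor⟩ := hadj
        rcases hor with hsame | ⟨hfv, hfu⟩
        · exact Finset.mem_union_left _ (Finset.mem_erase.2 ⟨hne.symm, (Finset.mem_filter.2
            ⟨Finset.mem_univ _, by rw [← hsame, hb0]⟩)⟩)
        · rcases hfu with hlow | hhigh
          · refine Finset.mem_union_left _ (Finset.mem_erase.2 ⟨hne.symm, Finset.mem_filter.2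
              ⟨Finset.mem_univ _, Nat.div_eq_of_lt (by omega)⟩⟩)
          · exact Finset.mem_union_right _ (Finset.mem_filter.2 ⟨Finset.mem_univ _, hhigh⟩)
      calc G₀.degree v ≤ _ := Finset.card_le_card hsub
        _ ≤ ((Finset.univ.filter (fun u : V => m u / (t+1) = 0)).erase v).card
            + (Finset.univ.filter (fun u : V => q*(t+1) ≤ m u)).card :=
          Finset.card_union_le _ _
        _ ≤ t + r := by
          have hvblk : v ∈ Finset.univ.filter (fun u : V => m u / (t+1) = 0) :=
            Finset.mem_filter.2 ⟨Finset.mem_univ _, hb0⟩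
          rw [hExtra_card, Finset.card_erase_of_mem hvblk, hblock_card 0 hq1]
          omega
    · rw [if_neg h1]
      by_cases h2 : q*(t+1) ≤ m v
      · -- extra vertex: neighbors in F
        have hdivq : m v / (t+1) = q := by
          have h3 : m v < q*(t+1) + (t+1) := by
            have := hmlt v
            omega
          have hle : q ≤ m v / (t+1) := (Nat.le_div_iff_mul_le (by omega)).2 h2
          have hlt : m v / (t+1) < q + 1 := (Nat.div_lt_iff_lt_mul (by omega)).2 (by nlinarith)
          omega
        set F := Finset.univ.filter (fun u : V => m u < t+1-r ∨ q*(t+1) ≤ m u) with hF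
        have hvF : v ∈ F := Finset.mem_filter.2 ⟨Finset.mem_univ _, Or.inr h2⟩
        have hsub : G₀.neighborFinset v ⊆ F.erase v := by
          intro u hu
          obtain ⟨hne, hor⟩ := (SimpleGraph.mem_neighborFinset ..).1 hu
          refine Finset.mem_erase.2 ⟨hne.symm, Finset.mem_filter.2 ⟨Finset.mem_univ _, ?_⟩⟩
          rcases hor with hsame | ⟨hfv, hfu⟩
          · refine Or.inr ?_
            rw [hdivq] at hsame
            exact (Nat.le_div_iff_mul_le (by omega)).1 (le_of_eq hsame)
          · exact hfu
        calc G₀.degree v ≤ (F.erase v).card := Finset.card_le_card hsub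
          _ = t := by rw [Finset.card_erase_of_mem hvF, hF_card]; omega
          _ ≤ t + 0 := by omega
      · -- middle vertex: neighbors in own block only
        push_neg at h2
        set b := m v / (t+1) with hb_def
        have hbq : b < q := (Nat.div_lt_iff_lt_mul (by omega)).2 (by nlinarith)
        set B := Finset.univ.filter (fun u : V => m u / (t+1) = b) with hB
        have hvB : v ∈ B := Finset.mem_filter.2 ⟨Finset.mem_univ _, rfl⟩
        have hsub : G₀.neighborFinset v ⊆ B.erase v := by
          intro u hu
          obtain ⟨hne, hor⟩ := (SimpleGraph.mem_neighborFinset ..).1 hu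
          refine Finset.mem_erase.2 ⟨hne.symm, Finset.mem_filter.2 ⟨Finset.mem_univ _, ?_⟩⟩
          rcases hor with hsame | ⟨hfv, hfu⟩
          · exact hsame.symm
          · rcases hfv with h | h
            · omega
            · omega
        calc G₀.degree v ≤ (B.erase v).card := Finset.card_le_card hsub
          _ = t := by rw [Finset.card_erase_of_mem hvB, hblock_card b hbq]; omega
          _ ≤ t + 0 := by omega
  -- sum of degrees of G₀
  have hsum0 : ∑ v : V, G₀.degree v ≤ n * t + r * (t+1-r) := by
    calc ∑ v : V, G₀.degree v ≤ ∑ v : V, (t + (if m v < t+1-r then r else 0)) :=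
        Finset.sum_le_sum (fun v _ => hdeg0_le v)
      _ = n * t + r * (t+1-r) := by
        rw [Finset.sum_add_distrib]
        have h1 : (∑ _x : V, t) = n * t := by
          rw [Finset.sum_const, Finset.card_univ, hV, smul_eq_mul]
        have h2 : (∑ x : V, if m x < t+1-r then r else 0) = r * (t+1-r) := by
          rw [Finset.sum_ite, Finset.sum_const, Finset.sum_const, smul_eq_mul, smul_eq_mul,
            mul_zero, add_zero, hFlow_card, mul_comm]
        rw [h1, h2]
  -- minimality: 2 e(G) ≤ 2 e(G₀) ≤ n t + r (t+1-r)
  have hmin0 := hmin G₀ inst0 hdeg0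
  have h2e : ∑ v : V, G.degree v ≤ n * t + r * (t+1-r) := by
    have h1 : ∑ v : V, G.degree v = 2 * G.edgeFinset.card :=
      SimpleGraph.sum_degrees_eq_twice_card_edges G
    have h2 : ∑ v : V, G₀.degree v = 2 * G₀.edgeFinset.card :=
      SimpleGraph.sum_degrees_eq_twice_card_edges G₀
    omega
  -- the charging argument
  set H := Finset.univ.filter (fun x : V => t+1 ≤ G.degree x) with hH
  set L := Finset.univ.filter (fun x : V => ¬ (t+1 ≤ G.degree x)) with hL
  have hHL : H.card + L.card = n := by
    rw [hH, hL, Finset.card_filter_add_card_filter_not, Finset.card_univ, hV]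
  -- every low vertex has a high vertex in its closed neighborhood
  have hkey : ∀ v : V, G.degree v = t →
      ∃ x ∈ insert v (G.neighborFinset v), t+1 ≤ G.degree x := by
    intro v hdv
    by_contra hno
    push_neg at hno
    set S := insert v (G.neighborFinset v) with hS
    have hvS : v ∈ S := Finset.mem_insert_self _ _
    have hdS : ∀ u ∈ S, G.degree u = t := by
      intro u hu
      have h1 := hno u hu
      have h2 := hdG u
      omega
    have hScard : S.card = t + 1 := by
      rw [hS, Finset.card_insert_of_notMem (G.notMem_neighborFinset_self v)]
      change (G.neighborFinset v).card + 1 = t + 1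
      rw [show (G.neighborFinset v).card = G.degree v from rfl, hdv]
    have hclique : ∀ u ∈ S, ∀ w ∈ S, u ≠ w → G.Adj u w := by
      have hNcl := nbhd_clique G ht hdv (hdeg v)
      intro u hu w hw huw
      rcases Finset.mem_insert.1 hu with rfl | hu'
      · rcases Finset.mem_insert.1 hw with rfl | hw'
        · exact absurd rfl huw
        · exact (SimpleGraph.mem_neighborFinset ..).1 hw'
      · rcases Finset.mem_insert.1 hw with rfl | hw'
        · exact ((SimpleGraph.mem_neighborFinset ..).1 hu').symm
        · exact hNcl u hu' w hw' huw
    have hclosed : ∀ u ∈ S, ∀ w : V, G.Adj u w → w ∈ S := by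
      intro u hu w hadj
      have hdu : G.degree u = t := hdS u hu
      have hsub : S.erase u ⊆ G.neighborFinset u := by
        intro x hx
        obtain ⟨hxu, hxS⟩ := Finset.mem_erase.1 hx
        exact (SimpleGraph.mem_neighborFinset ..).2 (hclique u hu x hxS (Ne.symm hxu))
      have hcards : (G.neighborFinset u).card ≤ (S.erase u).card := by
        rw [Finset.card_erase_of_mem hu, hScard,
          show (G.neighborFinset u).card = G.degree u from rfl, hdu]
        omega
      have heq : S.erase u = G.neighborFinset u :=
        Finset.eq_of_subset_of_card_le hsub hcards
      have : w ∈ G.neighborFinset u := (SimpleGraph.mem_neighborFinset ..).2 hadj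
      rw [← heq] at this
      exact (Finset.erase_subset u S) this
    exact hcon ⟨S, hScard, hclique, hclosed⟩
  -- the charging function
  set f : V → V := fun v =>
    if h : ∃ x ∈ insert v (G.neighborFinset v), t+1 ≤ G.degree x then h.choose else v
    with hf_def
  have hfL : ∀ v ∈ L, f v ∈ H ∧ v ∈ G.neighborFinset (f v) := by
    intro v hv
    have hdvle := (Finset.mem_filter.1 hv).2
    have hdv : G.degree v = t := by
      have := hdG v
      omega
    have hex := hkey v hdv
    have hfeq : f v = hex.choose := by
      rw [hf_def]
      exact dif_pos hex
    rw [hfeq]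
    obtain ⟨hmem, hdx⟩ := hex.choose_spec
    constructor
    · exact Finset.mem_filter.2 ⟨Finset.mem_univ _, hdx⟩
    · have hne : hex.choose ≠ v := by
        intro heq
        rw [heq] at hdx
        omega
      have : hex.choose ∈ G.neighborFinset v := by
        rcases Finset.mem_insert.1 hmem with h | h
        · exact absurd h hne
        · exact h
      exact (SimpleGraph.mem_neighborFinset ..).2
        (((SimpleGraph.mem_neighborFinset ..).1 this).symm)
  have hLsum : L.card = ∑ x ∈ H, (L.filter (fun v => f v = x)).card :=
    Finset.card_eq_sum_card_fiberwise (fun v hv => (hfL v hv).1)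
  have hfiber : ∀ x ∈ H, (L.filter (fun v => f v = x)).card ≤ G.degree x := by
    intro x hx
    have hsub : L.filter (fun v => f v = x) ⊆ G.neighborFinset x := by
      intro v hv
      obtain ⟨hvL, hfv⟩ := Finset.mem_filter.1 hv
      have := (hfL v hvL).2
      rwa [hfv] at this
    calc (L.filter (fun v => f v = x)).card ≤ (G.neighborFinset x).card :=
        Finset.card_le_card hsub
      _ = G.degree x := rfl
  -- per-vertex inequality for high vertices
  have hperv : ∀ x ∈ H, 1 + G.degree x ≤ (t+2) * (G.degree x - t) := by
    intro x hx
    have hdx := (Finset.mem_filter.1 hx).2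
    obtain ⟨k, hk⟩ : ∃ k, G.degree x = t + k + 1 := ⟨G.degree x - t - 1, by omega⟩
    rw [hk]
    have : (t+2) * (t + k + 1 - t) = (t+2) * (k+1) := by congr 1; omega
    rw [this]
    nlinarith
  -- combine
  have hchain : n ≤ (t+2) * (∑ x : V, (G.degree x - t)) := by
    have h1 : n ≤ ∑ x ∈ H, (1 + G.degree x) := by
      rw [Finset.sum_add_distrib, Finset.sum_const, smul_eq_mul, mul_one]
      have : L.card ≤ ∑ x ∈ H, G.degree x := by
        rw [hLsum]
        exact Finset.sum_le_sum hfiber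
      omega
    have h2 : ∑ x ∈ H, (1 + G.degree x) ≤ ∑ x ∈ H, (t+2) * (G.degree x - t) :=
      Finset.sum_le_sum hperv
    have h3 : ∑ x ∈ H, (t+2) * (G.degree x - t) ≤ (t+2) * ∑ x : V, (G.degree x - t) := by
      rw [Finset.mul_sum]
      exact Finset.sum_le_sum_of_subset (Finset.filter_subset _ _)
    omega
  have hsum_sub : (∑ x : V, (G.degree x - t)) + n * t = ∑ x : V, G.degree x := by
    have h1 : (n : ℕ) * t = ∑ _x : V, t := by
      rw [Finset.sum_const, Finset.card_univ, hV, smul_eq_mul]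
    rw [h1, ← Finset.sum_add_distrib]
    exact Finset.sum_congr rfl (fun x _ => Nat.sub_add_cancel (hdG x))
  have hfin : n ≤ (t+2) * (r * (t+1-r)) := by
    have hsub_le : (∑ x : V, (G.degree x - t)) ≤ r * (t+1-r) := by omega
    calc n ≤ (t+2) * (∑ x : V, (G.degree x - t)) := hchain
      _ ≤ (t+2) * (r * (t+1-r)) := Nat.mul_le_mul_left _ hsub_le
  have hrle : r ≤ t+1 := by omega
  have hcast : (n : ℝ) ≤ ((t:ℝ)+2) * ((r:ℝ) * ((t:ℝ)+1-(r:ℝ))) := by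
    have h := (Nat.cast_le (α := ℝ)).2 hfin
    push_cast [Nat.cast_sub hrle] at h
    convert h using 3 <;> push_cast <;> ring
  nlinarith [hn, hcast, sq_nonneg ((t:ℝ)+1-2*(r:ℝ)), htR]
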